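/- Let σ < 0 and 0 < δt < Δt ≤ ΔT. Then |δγ|/γ ≤ 1.58·|σ|·(Δt − δt). -/

import Mathlib

/-- `log(1+a)/a - log(1+b)/b ≤ b - a` for `0 < a < b`. -/
lemma mvt_aux {a b : ℝ} (ha : 0 < a) (hab : a < b) :
    Real.log (1+a)/a - Real.log (1+b)/b ≤ b - a := by
  have hcont : ContinuousOn (fun u : ℝ => Real.log (1+u) / u) (Set.Icc a b) := by
    apply ContinuousOn.div
    · exact (continuousOn_const.add continuousOn_id).log
        (fun x hx => by have h1 := hx.1; have : (0:ℝ) < 1 + x := by linarith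
                        exact ne_of_gt this)
    · exact continuousOn_id
    · intro x hx
      exact ne_of_gt (lt_of_lt_of_le ha hx.1)
  have hderiv : ∀ x ∈ Set.Ioo a b, HasDerivAt (fun u : ℝ => Real.log (1+u) / u)
      (((1+x)⁻¹ * 1 * x - Real.log (1+x) * 1) / x ^ 2) x := by
    intro x hx
    have hx0 : 0 < x := lt_trans ha hx.1
    have h1x : (0:ℝ) < 1 + x := by linarith
    have hl : HasDerivAt (fun u : ℝ => Real.log (1+u)) ((1+x)⁻¹ * 1) x := by
      exact (Real.hasDerivAt_log (ne_of_gt h1x)).comp x ((hasDerivAt_id x).const_add 1)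
    exact hl.div (hasDerivAt_id x) (ne_of_gt hx0)
  obtain ⟨c, hc, hceq⟩ := exists_hasDerivAt_eq_slope _ _ hab hcont hderiv
  have hc0 : 0 < c := lt_trans ha hc.1
  have h1c : (0:ℝ) < 1 + c := by linarith
  have hlog : Real.log (1+c) ≤ c := by
    have := Real.log_le_sub_one_of_pos h1c
    linarith
  have hd : -1 ≤ ((1+c)⁻¹ * 1 * c - Real.log (1+c) * 1) / c ^ 2 := by
    rw [le_div_iff₀ (by positivity : (0:ℝ) < c ^ 2)]
    have h2 : c - c^2 ≤ (1+c)⁻¹ * c := by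
      rw [inv_mul_eq_div, le_div_iff₀ h1c]
      nlinarith
    nlinarith
  rw [hceq] at hd
  have hba : (0:ℝ) < b - a := by linarith
  rw [le_div_iff₀ hba] at hd
  linarith


set_option maxHeartbeats 1000000 in
lemma core_ineq {a b W : ℝ} (ha : 0 < a) (hab : a < b) (hbW : b ≤ W)
    (hmvt : Real.log (1+a)/a - Real.log (1+b)/b ≤ b - a) :
    0 < (1 - Real.exp (-(2*W) * (Real.log (1+b)/b))) / (2+b) ∧
    (1 - Real.exp (-(2*W) * (Real.log (1+b)/b))) / (2+b) ≤
      (1 - Real.exp (-(2*W) * (Real.log (1+a)/a))) / (2+a) ∧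
    (1 - Real.exp (-(2*W) * (Real.log (1+a)/a))) / (2+a)
      - (1 - Real.exp (-(2*W) * (Real.log (1+b)/b))) / (2+b)
      ≤ (3/2) * (b-a) * ((1 - Real.exp (-(2*W) * (Real.log (1+b)/b))) / (2+b)) := by
  have hb0 : 0 < b := lt_trans ha hab
  have hW : 0 < W := lt_of_lt_of_le hb0 hbW
  set ga := Real.log (1+a)/a with hga_def
  set gb := Real.log (1+b)/b with hgb_def
  set Ea := Real.exp (-(2*W) * ga) with hEa_def
  set Eb := Real.exp (-(2*W) * gb) with hEb_def
  have h1a : (0:ℝ) < 1 + a := by linarith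
  have h1b : (0:ℝ) < 1 + b := by linarith
  have h2a : (0:ℝ) < 2 + a := by linarith
  have h2b : (0:ℝ) < 2 + b := by linarith
  have hgb_pos : 0 < gb := div_pos (Real.log_pos (by linarith)) hb0
  -- gb ≤ ga via Bernoulli
  have hgba : gb ≤ ga := by
    have hp : 1 ≤ b / a := (one_le_div ha).2 (le_of_lt hab)
    have hBern := one_add_mul_self_le_rpow_one_add (s := a) (by linarith) hp
    have hlog : Real.log (1+b) ≤ (b/a) * Real.log (1+a) := by
      have h1 : 1 + (b/a) * a = 1 + b := by field_simp
      have h2 : Real.log (1 + (b/a)*a) ≤ Real.log ((1+a) ^ (b/a)) :=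
        Real.log_le_log (by rw [h1]; exact h1b) hBern
      rwa [h1, Real.log_rpow h1a] at h2
    rw [hgb_def, hga_def, div_le_div_iff₀ hb0 ha]
    calc Real.log (1+b) * a ≤ ((b/a) * Real.log (1+a)) * a := by nlinarith
      _ = Real.log (1+a) * b := by field_simp
  have hEaEb : Ea ≤ Eb := Real.exp_le_exp.2 (by nlinarith)
  have hEb1 : Eb < 1 := by
    rw [hEb_def, Real.exp_lt_one_iff]
    nlinarith
  have hEbpos : 0 < Eb := Real.exp_pos _
  have hEapos : 0 < Ea := Real.exp_pos _
  -- key1 : Eb - Ea ≤ Eb * (2*W*(ga - gb))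
  have hEa_eq : Ea = Eb * Real.exp (-(2*W*(ga-gb))) := by
    rw [hEa_def, hEb_def, ← Real.exp_add]; congr 1; ring
  have key1 : Eb - Ea ≤ Eb * (2*W*(ga - gb)) := by
    have hexp := Real.add_one_le_exp (-(2*W*(ga-gb)))
    nlinarith [hEa_eq]
  -- key2 : W * Eb * (2+b) ≤ 1 - Eb
  have key2 : W * Eb * (2+b) ≤ 1 - Eb := by
    have hp : 1 ≤ W / b := (one_le_div hb0).2 hbW
    have hBern := one_add_mul_self_le_rpow_one_add (s := b*(2+b)) (by nlinarith) hp
    have h1 : (1:ℝ) + b*(2+b) = (1+b)^2 := by ring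
    have h2 : ((1+b:ℝ)^2) ^ (W/b) = Real.exp (2*W*gb) := by
      rw [Real.rpow_def_of_pos (by positivity), Real.log_pow]
      congr 1
      rw [hgb_def]
      field_simp
      ring
    rw [h1, h2] at hBern
    have h3 : (W/b)*(b*(2+b)) = W*(2+b) := by field_simp
    rw [h3] at hBern
    have hmul : Eb * Real.exp (2*W*gb) = 1 := by
      rw [hEb_def, ← Real.exp_add, show -(2*W)*gb + 2*W*gb = 0 by ring, Real.exp_zero]
    nlinarith
  refine ⟨div_pos (by linarith) h2b, ?_, ?_⟩
  · -- monotonicity of phi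
    have h1 : (1 - Eb) / (2+b) ≤ (1 - Eb) / (2+a) :=
      div_le_div_of_nonneg_left (by linarith) h2a (by linarith)
    have h2 : (1 - Eb) / (2+a) ≤ (1 - Ea) / (2+a) :=
      (div_le_div_iff_of_pos_right h2a).2 (by linarith)
    linarith
  · -- main bound
    have final : (1-Ea)*(2+b) - (1-Eb)*(2+a) ≤ (3/2)*(b-a)*(1-Eb)*(2+a) := by
      have e1 : (Eb - Ea)*(2+b) ≤ 2*(b-a)*(W*Eb*(2+b)) := by
        have h5 : Eb - Ea ≤ 2*W*(b-a)*Eb := by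
          have h6 := mul_le_mul_of_nonneg_left hmvt (by positivity : (0:ℝ) ≤ 2*W*Eb)
          nlinarith
        nlinarith
      have e2 : 2*(b-a)*(W*Eb*(2+b)) ≤ 2*(b-a)*(1-Eb) := by
        have := mul_le_mul_of_nonneg_left key2 (by linarith : (0:ℝ) ≤ 2*(b-a))
        linarith
      have e3 : 3*(b-a)*(1-Eb) ≤ (3/2)*(b-a)*(1-Eb)*(2+a) := by
        nlinarith [mul_nonneg (mul_nonneg (by linarith : (0:ℝ) ≤ b-a)
          (by linarith : (0:ℝ) ≤ 1-Eb)) (le_of_lt ha)]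
      linarith [e1, e2, e3]
    have lhs_eq : (1-Ea)/(2+a) - (1-Eb)/(2+b)
        = ((1-Ea)*(2+b) - (1-Eb)*(2+a))/((2+a)*(2+b)) := by
      field_simp
    have rhs_eq : (3:ℝ)/2*(b-a)*((1-Eb)/(2+b))
        = ((3/2)*(b-a)*(1-Eb)*(2+a))/((2+a)*(2+b)) := by
      field_simp
    rw [lhs_eq, rhs_eq]
    exact (div_le_div_iff_of_pos_right (mul_pos h2a h2b)).2 final

/-- `β_τ = (1 - σ τ)^(-ΔT/τ)` (real exponent). -/
noncomputable def betaF (σ ΔT τ : ℝ) : ℝ := (1 - σ * τ) ^ (-(ΔT / τ))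

/-- `γ_τ = (β_τ² - 1)/(σ (2 - σ τ))`. -/
noncomputable def gammaF (σ ΔT τ : ℝ) : ℝ := ((betaF σ ΔT τ) ^ 2 - 1) / (σ * (2 - σ * τ))

lemma gamma_eq (σ ΔT τ : ℝ) (hσ : σ < 0) (hτ : 0 < τ) :
    gammaF σ ΔT τ =
      (1 - Real.exp (-(2*((-σ)*ΔT)) * (Real.log (1+(-σ)*τ)/((-σ)*τ)))) / ((-σ)*(2+(-σ)*τ)) := by
  have hs : 0 < -σ := neg_pos.2 hσ
  have h1a : (0:ℝ) < 1 + (-σ)*τ := by nlinarith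
  have hbeta : betaF σ ΔT τ ^ 2
      = Real.exp (-(2*((-σ)*ΔT)) * (Real.log (1+(-σ)*τ)/((-σ)*τ))) := by
    unfold betaF
    have h1 : 1 - σ*τ = 1 + (-σ)*τ := by ring
    rw [h1, ← Real.rpow_natCast ((1+(-σ)*τ) ^ (-(ΔT/τ))) 2, ← Real.rpow_mul h1a.le,
        Real.rpow_def_of_pos h1a]
    congr 1
    have hτ' : τ ≠ 0 := ne_of_gt hτ
    have hσ' : σ ≠ 0 := ne_of_lt hσ
    field_simp
    ring
  unfold gammaF
  rw [hbeta]
  have hden : σ * (2 - σ*τ) = -((-σ)*(2+(-σ)*τ)) := by ring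
  rw [hden, div_neg, ← neg_div, neg_sub]

theorem dg_over_g_bound (σ δt Δt ΔT : ℝ) (hσ : σ < 0)
    (hδt : 0 < δt) (hδtΔt : δt < Δt) (hΔtΔT : Δt ≤ ΔT) :
    |gammaF σ ΔT Δt - gammaF σ ΔT δt| / gammaF σ ΔT Δt ≤
      1.58 * |σ| * (Δt - δt) := by
  have hs : 0 < -σ := neg_pos.2 hσ
  have hΔt : 0 < Δt := lt_trans hδt hδtΔt
  set a := (-σ)*δt with ha_def
  set b := (-σ)*Δt with hb_def
  set W := (-σ)*ΔT with hW_def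
  have ha : 0 < a := mul_pos hs hδt
  have hab : a < b := by rw [ha_def, hb_def]; exact mul_lt_mul_of_pos_left hδtΔt hs
  have hbW : b ≤ W := by rw [hb_def, hW_def]; exact mul_le_mul_of_nonneg_left hΔtΔT hs.le
  have hmvt := mvt_aux ha hab
  obtain ⟨hpos, hmono, hbound⟩ := core_ineq ha hab hbW hmvt
  set Pa := (1 - Real.exp (-(2*W) * (Real.log (1+a)/a))) / (2+a) with hPa_def
  set Pb := (1 - Real.exp (-(2*W) * (Real.log (1+b)/b))) / (2+b) with hPb_def
  have h2a : (0:ℝ) < 2 + a := by linarith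
  have h2b : (0:ℝ) < 2 + b := by linarith
  have ega : gammaF σ ΔT δt = Pa / (-σ) := by
    rw [gamma_eq σ ΔT δt hσ hδt, hPa_def, div_div, mul_comm (2+a) (-σ)]
  have egb : gammaF σ ΔT Δt = Pb / (-σ) := by
    rw [gamma_eq σ ΔT Δt hσ hΔt, hPb_def, div_div, mul_comm (2+b) (-σ)]
  rw [ega, egb]
  have hXb_pos : 0 < Pb / (-σ) := div_pos hpos hs
  have hXab : Pb / (-σ) ≤ Pa / (-σ) := (div_le_div_iff_of_pos_right hs).2 hmono
  rw [abs_of_nonpos (by linarith), neg_sub, div_le_iff₀ hXb_pos, div_sub_div_same,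
    div_le_iff₀ hs, abs_of_neg hσ]
  have hba : b - a = (-σ)*(Δt - δt) := by rw [ha_def, hb_def]; ring
  have hKey : Pa - Pb ≤ (3/2)*(b-a)*Pb := hbound
  have hm : (0:ℝ) ≤ (b-a)*Pb := mul_nonneg (by linarith) hpos.le
  have hgoal : (3/2)*(b-a)*Pb ≤ 1.58 * (-σ) * (Δt - δt) * (Pb / (-σ)) * (-σ) := by
    have : 1.58 * (-σ) * (Δt - δt) * (Pb / (-σ)) * (-σ) = 1.58 * ((b-a)*Pb) := by
      have hσ' : σ ≠ 0 := ne_of_lt hσ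
      rw [hba]; field_simp
    rw [this]; nlinarith
  linarith
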